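/- The ratio R_{n+1}/R_n converges to 3 + 2\sqrt{2} as n \to \infty. -/

import Mathlib

open Filter


lemma choose_down (m k : ℕ) :
    (Nat.choose m k : ℚ) = ((m : ℚ) + 1 - k) * (Nat.choose (m+1) k : ℚ) / ((m : ℚ) + 1) := by
  have h := Nat.choose_mul_succ_eq m k
  rcases le_or_gt k (m+1) with hk | hk
  · have hc : ((m + 1 - k : ℕ) : ℚ) = (m : ℚ) + 1 - k := by
      push_cast [Nat.cast_sub hk]; ring
    field_simp
    have := congrArg (fun x : ℕ => (x : ℚ)) h
    push_cast at this
    rw [hc] at this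
    linarith [this]
  · rw [Nat.choose_eq_zero_of_lt (by omega), Nat.choose_eq_zero_of_lt hk]
    simp

lemma choose_col (m k : ℕ) :
    (Nat.choose m (k+1) : ℚ) = ((m : ℚ) - k) * (Nat.choose m k : ℚ) / ((k : ℚ) + 1) := by
  have h := Nat.choose_succ_right_eq m k
  rcases le_or_gt k m with hk | hk
  · have hc : ((m - k : ℕ) : ℚ) = (m : ℚ) - k := by push_cast [Nat.cast_sub hk]; ring
    field_simp
    have := congrArg (fun x : ℕ => (x : ℚ)) h
    push_cast at this
    rw [hc] at this
    linarith [this]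
  · rw [Nat.choose_eq_zero_of_lt (by omega), Nat.choose_eq_zero_of_lt hk]
    simp

lemma key1 (n k : ℕ) :
    ((n:ℚ)+1) * ((n:ℚ)+2) *
      ( ((n:ℚ)+2) * (Nat.choose (n+2) k : ℚ) * (Nat.choose (n+2+k) k : ℚ)
        - 3*(2*(n:ℚ)+3) * (Nat.choose (n+1) k : ℚ) * (Nat.choose (n+1+k) k : ℚ)
        + ((n:ℚ)+1) * (Nat.choose n k : ℚ) * (Nat.choose (n+k) k : ℚ) )
    = (-2) * ((k:ℚ)+1)^2 * (2*(n:ℚ)+3) * (Nat.choose (n+2) (k+1) : ℚ) * (Nat.choose (n+k+1) (k+1) : ℚ)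
      + 2 * (k:ℚ)^2 * (2*(n:ℚ)+3) * (Nat.choose (n+2) k : ℚ) * (Nat.choose (n+k) k : ℚ) := by
  have e1 : n+1+k = n+k+1 := by omega
  have e2 : n+2+k = n+k+2 := by omega
  rw [e1, e2]
  rw [choose_col (n+2) k, choose_col (n+k+1) k,
      choose_down n k, choose_down (n+1) k,
      choose_down (n+k) k, choose_down (n+k+1) k]
  have h1 : ((n:ℚ)+1) ≠ 0 := by positivity
  have h2 : ((n:ℚ)+2) ≠ 0 := by positivity
  have h3 : ((k:ℚ)+1) ≠ 0 := by positivity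
  have h4 : ((n:ℚ)+(k:ℚ)+1) ≠ 0 := by positivity
  have h5 : ((n:ℚ)+(k:ℚ)+2) ≠ 0 := by positivity
  push_cast
  field_simp
  ring

lemma two_k_sub_one_ne (k : ℕ) : (2*(k:ℚ)-1) ≠ 0 := by
  intro h
  have h2 : ((2*k : ℕ) : ℚ) = ((1 : ℕ) : ℚ) := by push_cast; linarith
  have h3 : 2*k = 1 := Nat.cast_injective h2
  omega

lemma key2 (n k : ℕ) :
    ((n:ℚ)+1) * ((n:ℚ)+2) *
      ( ((n:ℚ)+2) *
          ( (Nat.choose (n+2) k : ℚ) * (Nat.choose (n+2+k) k : ℚ) * (1/(2*(k:ℚ)-1))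
            - 2 * ((Nat.choose (n+1) k : ℚ) * (Nat.choose (n+1+k) k : ℚ) * (1/(2*(k:ℚ)-1)))
            + (Nat.choose n k : ℚ) * (Nat.choose (n+k) k : ℚ) * (1/(2*(k:ℚ)-1)) )
        - 3 * (Nat.choose (n+1) k : ℚ) * (Nat.choose (n+1+k) k : ℚ)
        + (Nat.choose n k : ℚ) * (Nat.choose (n+k) k : ℚ) )
    = (-2) * ((k:ℚ)+1)^2 * (Nat.choose (n+2) (k+1) : ℚ) * (Nat.choose (n+k+1) (k+1) : ℚ)
      + 2 * (k:ℚ)^2 * (Nat.choose (n+2) k : ℚ) * (Nat.choose (n+k) k : ℚ) := by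
  have e1 : n+1+k = n+k+1 := by omega
  have e2 : n+2+k = n+k+2 := by omega
  rw [e1, e2]
  rw [choose_col (n+2) k, choose_col (n+k+1) k,
      choose_down n k, choose_down (n+1) k,
      choose_down (n+k) k, choose_down (n+k+1) k]
  have h1 : ((n:ℚ)+1) ≠ 0 := by positivity
  have h2 : ((n:ℚ)+2) ≠ 0 := by positivity
  have h3 : ((k:ℚ)+1) ≠ 0 := by positivity
  have h4 : ((n:ℚ)+(k:ℚ)+1) ≠ 0 := by positivity
  have h5 : ((n:ℚ)+(k:ℚ)+2) ≠ 0 := by positivity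
  have h6 := two_k_sub_one_ne k
  push_cast
  field_simp
  ring


noncomputable def R (n : ℕ) : ℚ :=
  ∑ k ∈ Finset.range (n + 1),
    (Nat.choose n k : ℚ) * (Nat.choose (n + k) k : ℚ) * (1 / (2 * (k : ℚ) - 1))

noncomputable def D (n : ℕ) : ℚ :=
  ∑ k ∈ Finset.range (n + 1), (Nat.choose n k : ℚ) * (Nat.choose (n + k) k : ℚ)

lemma D_ext (n m : ℕ) (h : n+1 ≤ m) :
    ∑ k ∈ Finset.range m, (Nat.choose n k : ℚ) * (Nat.choose (n + k) k : ℚ) = D n := by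
  rw [D]
  exact (Finset.sum_subset (Finset.range_subset_range.mpr h) (fun k _ hk => by
    rw [Nat.choose_eq_zero_of_lt (by simp at hk ⊢; omega)]; simp)).symm

lemma R_ext (n m : ℕ) (h : n+1 ≤ m) :
    ∑ k ∈ Finset.range m,
      (Nat.choose n k : ℚ) * (Nat.choose (n + k) k : ℚ) * (1 / (2 * (k : ℚ) - 1)) = R n := by
  rw [R]
  exact (Finset.sum_subset (Finset.range_subset_range.mpr h) (fun k _ hk => by
    rw [Nat.choose_eq_zero_of_lt (by simp at hk ⊢; omega)]; simp)).symm

lemma E1 (n : ℕ) :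
    ((n:ℚ)+2) * D (n+2) = 3*(2*(n:ℚ)+3) * D (n+1) - ((n:ℚ)+1) * D n := by
  have tele : ∑ k ∈ Finset.range (n+3),
      ( ((n:ℚ)+1) * ((n:ℚ)+2) *
        ( ((n:ℚ)+2) * (Nat.choose (n+2) k : ℚ) * (Nat.choose (n+2+k) k : ℚ)
          - 3*(2*(n:ℚ)+3) * (Nat.choose (n+1) k : ℚ) * (Nat.choose (n+1+k) k : ℚ)
          + ((n:ℚ)+1) * (Nat.choose n k : ℚ) * (Nat.choose (n+k) k : ℚ) ) ) = 0 := by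
    have step : ∀ k ∈ Finset.range (n+3),
        ( ((n:ℚ)+1) * ((n:ℚ)+2) *
          ( ((n:ℚ)+2) * (Nat.choose (n+2) k : ℚ) * (Nat.choose (n+2+k) k : ℚ)
            - 3*(2*(n:ℚ)+3) * (Nat.choose (n+1) k : ℚ) * (Nat.choose (n+1+k) k : ℚ)
            + ((n:ℚ)+1) * (Nat.choose n k : ℚ) * (Nat.choose (n+k) k : ℚ) ) )
        = (fun j : ℕ => 2 * (j:ℚ)^2 * (2*(n:ℚ)+3) * (Nat.choose (n+2) j : ℚ) * (Nat.choose (n+j) j : ℚ)) k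
          - (fun j : ℕ => 2 * (j:ℚ)^2 * (2*(n:ℚ)+3) * (Nat.choose (n+2) j : ℚ) * (Nat.choose (n+j) j : ℚ)) (k+1) := by
      intro k _
      simp only
      rw [key1 n k]
      have e : n+(k+1) = n+k+1 := by omega
      rw [e]
      push_cast
      ring
    rw [Finset.sum_congr rfl step, Finset.sum_range_sub']
    rw [Nat.choose_eq_zero_of_lt (show n+2 < n+3 by omega)]
    norm_num
  have expand : ∑ k ∈ Finset.range (n+3),
      ( ((n:ℚ)+1) * ((n:ℚ)+2) *
        ( ((n:ℚ)+2) * (Nat.choose (n+2) k : ℚ) * (Nat.choose (n+2+k) k : ℚ)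
          - 3*(2*(n:ℚ)+3) * (Nat.choose (n+1) k : ℚ) * (Nat.choose (n+1+k) k : ℚ)
          + ((n:ℚ)+1) * (Nat.choose n k : ℚ) * (Nat.choose (n+k) k : ℚ) ) )
      = ((n:ℚ)+1) * ((n:ℚ)+2) *
        ( ((n:ℚ)+2) * D (n+2) - 3*(2*(n:ℚ)+3) * D (n+1) + ((n:ℚ)+1) * D n ) := by
    rw [← D_ext n (n+3) (by omega), ← D_ext (n+1) (n+3) (by omega),
        ← D_ext (n+2) (n+3) (by omega)]
    rw [Finset.mul_sum, Finset.mul_sum, Finset.mul_sum, ← Finset.sum_sub_distrib,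
        ← Finset.sum_add_distrib, Finset.mul_sum]
    exact Finset.sum_congr rfl (fun k _ => by ring)
  rw [expand] at tele
  have hne : ((n:ℚ)+1) * ((n:ℚ)+2) ≠ 0 := by positivity
  have := mul_eq_zero.mp tele
  rcases this with h | h
  · exact absurd h hne
  · linarith

lemma sum5 (s : Finset ℕ) (c1 c2 c3 c4 c5 : ℚ) (f1 f2 f3 f4 f5 : ℕ → ℚ) :
    ∑ k ∈ s, (c1*f1 k + c2*f2 k + c3*f3 k + c4*f4 k + c5*f5 k)
      = c1*(∑ k ∈ s, f1 k) + c2*(∑ k ∈ s, f2 k) + c3*(∑ k ∈ s, f3 k)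
        + c4*(∑ k ∈ s, f4 k) + c5*(∑ k ∈ s, f5 k) := by
  simp [Finset.sum_add_distrib, Finset.mul_sum]

lemma E2 (n : ℕ) :
    ((n:ℚ)+2) * (R (n+2) - 2 * R (n+1) + R n) = 3 * D (n+1) - D n := by
  have tele : ∑ k ∈ Finset.range (n+3),
      ( ((n:ℚ)+1) * ((n:ℚ)+2) *
        ( ((n:ℚ)+2) *
            ( (Nat.choose (n+2) k : ℚ) * (Nat.choose (n+2+k) k : ℚ) * (1/(2*(k:ℚ)-1))
              - 2 * ((Nat.choose (n+1) k : ℚ) * (Nat.choose (n+1+k) k : ℚ) * (1/(2*(k:ℚ)-1)))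
              + (Nat.choose n k : ℚ) * (Nat.choose (n+k) k : ℚ) * (1/(2*(k:ℚ)-1)) )
          - 3 * (Nat.choose (n+1) k : ℚ) * (Nat.choose (n+1+k) k : ℚ)
          + (Nat.choose n k : ℚ) * (Nat.choose (n+k) k : ℚ) ) ) = 0 := by
    have step : ∀ k ∈ Finset.range (n+3),
        ( ((n:ℚ)+1) * ((n:ℚ)+2) *
          ( ((n:ℚ)+2) *
              ( (Nat.choose (n+2) k : ℚ) * (Nat.choose (n+2+k) k : ℚ) * (1/(2*(k:ℚ)-1))
                - 2 * ((Nat.choose (n+1) k : ℚ) * (Nat.choose (n+1+k) k : ℚ) * (1/(2*(k:ℚ)-1)))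
                + (Nat.choose n k : ℚ) * (Nat.choose (n+k) k : ℚ) * (1/(2*(k:ℚ)-1)) )
            - 3 * (Nat.choose (n+1) k : ℚ) * (Nat.choose (n+1+k) k : ℚ)
            + (Nat.choose n k : ℚ) * (Nat.choose (n+k) k : ℚ) ) )
        = (fun j : ℕ => 2 * (j:ℚ)^2 * (Nat.choose (n+2) j : ℚ) * (Nat.choose (n+j) j : ℚ)) k
          - (fun j : ℕ => 2 * (j:ℚ)^2 * (Nat.choose (n+2) j : ℚ) * (Nat.choose (n+j) j : ℚ)) (k+1) := by
      intro k _
      simp only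
      rw [key2 n k]
      have e : n+(k+1) = n+k+1 := by omega
      rw [e]
      push_cast
      ring
    rw [Finset.sum_congr rfl step, Finset.sum_range_sub']
    rw [Nat.choose_eq_zero_of_lt (show n+2 < n+3 by omega)]
    norm_num
  have expand : ∑ k ∈ Finset.range (n+3),
      ( ((n:ℚ)+1) * ((n:ℚ)+2) *
        ( ((n:ℚ)+2) *
            ( (Nat.choose (n+2) k : ℚ) * (Nat.choose (n+2+k) k : ℚ) * (1/(2*(k:ℚ)-1))
              - 2 * ((Nat.choose (n+1) k : ℚ) * (Nat.choose (n+1+k) k : ℚ) * (1/(2*(k:ℚ)-1)))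
              + (Nat.choose n k : ℚ) * (Nat.choose (n+k) k : ℚ) * (1/(2*(k:ℚ)-1)) )
          - 3 * (Nat.choose (n+1) k : ℚ) * (Nat.choose (n+1+k) k : ℚ)
          + (Nat.choose n k : ℚ) * (Nat.choose (n+k) k : ℚ) ) )
      = ((n:ℚ)+1) * ((n:ℚ)+2) *
        ( ((n:ℚ)+2) * (R (n+2) - 2 * R (n+1) + R n) - (3 * D (n+1) - D n) ) := by
    calc ∑ k ∈ Finset.range (n+3),
        ( ((n:ℚ)+1) * ((n:ℚ)+2) *
          ( ((n:ℚ)+2) *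
              ( (Nat.choose (n+2) k : ℚ) * (Nat.choose (n+2+k) k : ℚ) * (1/(2*(k:ℚ)-1))
                - 2 * ((Nat.choose (n+1) k : ℚ) * (Nat.choose (n+1+k) k : ℚ) * (1/(2*(k:ℚ)-1)))
                + (Nat.choose n k : ℚ) * (Nat.choose (n+k) k : ℚ) * (1/(2*(k:ℚ)-1)) )
            - 3 * (Nat.choose (n+1) k : ℚ) * (Nat.choose (n+1+k) k : ℚ)
            + (Nat.choose n k : ℚ) * (Nat.choose (n+k) k : ℚ) ) )
        = ∑ k ∈ Finset.range (n+3),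
            ( (((n:ℚ)+1)*((n:ℚ)+2)*((n:ℚ)+2)) * ((Nat.choose (n+2) k : ℚ) * (Nat.choose (n+2+k) k : ℚ) * (1/(2*(k:ℚ)-1)))
              + (-2*((n:ℚ)+1)*((n:ℚ)+2)*((n:ℚ)+2)) * ((Nat.choose (n+1) k : ℚ) * (Nat.choose (n+1+k) k : ℚ) * (1/(2*(k:ℚ)-1)))
              + (((n:ℚ)+1)*((n:ℚ)+2)*((n:ℚ)+2)) * ((Nat.choose n k : ℚ) * (Nat.choose (n+k) k : ℚ) * (1/(2*(k:ℚ)-1)))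
              + (-3*((n:ℚ)+1)*((n:ℚ)+2)) * ((Nat.choose (n+1) k : ℚ) * (Nat.choose (n+1+k) k : ℚ))
              + (((n:ℚ)+1)*((n:ℚ)+2)) * ((Nat.choose n k : ℚ) * (Nat.choose (n+k) k : ℚ)) ) :=
          Finset.sum_congr rfl (fun k _ => by ring)
      _ = (((n:ℚ)+1)*((n:ℚ)+2)*((n:ℚ)+2)) * (∑ k ∈ Finset.range (n+3), (Nat.choose (n+2) k : ℚ) * (Nat.choose (n+2+k) k : ℚ) * (1/(2*(k:ℚ)-1)))
          + (-2*((n:ℚ)+1)*((n:ℚ)+2)*((n:ℚ)+2)) * (∑ k ∈ Finset.range (n+3), (Nat.choose (n+1) k : ℚ) * (Nat.choose (n+1+k) k : ℚ) * (1/(2*(k:ℚ)-1)))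
          + (((n:ℚ)+1)*((n:ℚ)+2)*((n:ℚ)+2)) * (∑ k ∈ Finset.range (n+3), (Nat.choose n k : ℚ) * (Nat.choose (n+k) k : ℚ) * (1/(2*(k:ℚ)-1)))
          + (-3*((n:ℚ)+1)*((n:ℚ)+2)) * (∑ k ∈ Finset.range (n+3), (Nat.choose (n+1) k : ℚ) * (Nat.choose (n+1+k) k : ℚ))
          + (((n:ℚ)+1)*((n:ℚ)+2)) * (∑ k ∈ Finset.range (n+3), (Nat.choose n k : ℚ) * (Nat.choose (n+k) k : ℚ)) :=
          sum5 _ _ _ _ _ _ _ _ _ _ _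
      _ = ((n:ℚ)+1) * ((n:ℚ)+2) *
          ( ((n:ℚ)+2) * (R (n+2) - 2 * R (n+1) + R n) - (3 * D (n+1) - D n) ) := by
          rw [R_ext n (n+3) (by omega), R_ext (n+1) (n+3) (by omega),
              R_ext (n+2) (n+3) (by omega), D_ext n (n+3) (by omega),
              D_ext (n+1) (n+3) (by omega)]
          ring
  rw [expand] at tele
  have hne : ((n:ℚ)+1) * ((n:ℚ)+2) ≠ 0 := by positivity
  rcases mul_eq_zero.mp tele with h | h
  · exact absurd h hne
  · linarith


lemma tendsto_zero_of_affine (x c : ℕ → ℝ) (a : ℝ) (ha0 : 0 ≤ a) (ha : a < 1)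
    (hx : ∀ n, 0 ≤ x n) (hc : Tendsto c atTop (nhds 0))
    (hrec : ∀ᶠ n in atTop, x (n+1) ≤ a * x n + c n) :
    Tendsto x atTop (nhds 0) := by
  rw [Metric.tendsto_atTop]
  intro ε hε
  have hδ : 0 < (1 - a) * ε / 4 := by
    have : 0 < 1 - a := by linarith
    positivity
  obtain ⟨N1, hN1⟩ := (Metric.tendsto_atTop.mp hc) _ hδ
  obtain ⟨N2, hN2⟩ := eventually_atTop.mp hrec
  set N := max N1 N2 with hN
  set B := (1 - a) * ε / 4 / (1 - a) with hB
  have hBε : B = ε / 4 := by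
    have h1a : (1:ℝ) - a ≠ 0 := by linarith
    rw [hB]
    field_simp
  have key : ∀ k, x (N + k) ≤ a ^ k * x N + B := by
    intro k
    induction k with
    | zero => simp [hBε]; positivity
    | succ k ih =>
      have h1 : x (N + k + 1) ≤ a * x (N + k) + c (N + k) :=
        hN2 _ (le_trans (le_max_right _ _) (Nat.le_add_right _ _))
      have h2 : c (N + k) < (1 - a) * ε / 4 := by
        have := hN1 (N + k) (le_trans (le_max_left _ _) (Nat.le_add_right _ _))
        rw [Real.dist_eq, sub_zero] at this
        exact lt_of_le_of_lt (le_abs_self _) this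
      have h3 : x (N + k) ≤ a ^ k * x N + B := ih
      have : x (N + k + 1) ≤ a * (a ^ k * x N + B) + (1 - a) * ε / 4 := by
        calc x (N + k + 1) ≤ a * x (N + k) + c (N + k) := h1
          _ ≤ a * (a ^ k * x N + B) + (1 - a) * ε / 4 := by
              have := mul_le_mul_of_nonneg_left h3 ha0
              linarith
      calc x (N + (k + 1)) = x (N + k + 1) := by ring_nf
        _ ≤ a * (a ^ k * x N + B) + (1 - a) * ε / 4 := this
        _ = a ^ (k+1) * x N + (a * B + (1-a) * ε / 4) := by ring
        _ ≤ a ^ (k+1) * x N + B := by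
            have : a * B + (1 - a) * ε / 4 ≤ B := by
              rw [hBε]
              nlinarith
            linarith
  -- choose K with a^K * x N < ε/2
  have hpow : Tendsto (fun k => a ^ k * x N) atTop (nhds 0) := by
    simpa using (tendsto_pow_atTop_nhds_zero_of_lt_one ha0 ha).mul_const (x N)
  obtain ⟨K, hK⟩ := (Metric.tendsto_atTop.mp hpow) (ε/2) (by positivity)
  refine ⟨N + K, fun n hn => ?_⟩
  rw [Real.dist_eq, sub_zero, abs_of_nonneg (hx n)]
  obtain ⟨k, rfl⟩ : ∃ k, n = N + k := ⟨n - N, by omega⟩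
  have hkK : K ≤ k := by omega
  have h1 : x (N + k) ≤ a ^ k * x N + B := key k
  have h2 : a ^ k * x N ≤ a ^ K * x N := by
    apply mul_le_mul_of_nonneg_right _ (hx N)
    exact pow_le_pow_of_le_one ha0 ha.le hkK
  have h3 : a ^ K * x N < ε / 2 := by
    have := hK K le_rfl
    rw [Real.dist_eq, sub_zero] at this
    exact lt_of_le_of_lt (le_abs_self _) this
  rw [hBε] at h1
  linarith


lemma ratio_limit (g S : ℕ → ℝ) (L : ℝ) (hL : 3 ≤ L)
    (hg : ∀ n, 0 < g n) (hS : ∀ n, 0 < S n)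
    (hrec : ∀ n, S (n+1) = S n + g n)
    (hratio : Tendsto (fun n => g (n+1) / g n) atTop (nhds L)) :
    Tendsto (fun n => S (n+1) / S n) atTop (nhds L) := by
  have hL0 : L ≠ 0 := by linarith
  set y : ℕ → ℝ := fun n => S n / g n with hy
  set ρ : ℕ → ℝ := fun n => g n / g (n+1) with hρ
  have hρpos : ∀ n, 0 < ρ n := fun n => div_pos (hg n) (hg (n+1))
  have hρlim : Tendsto ρ atTop (nhds (1/L)) := by
    have h := hratio.inv₀ hL0
    rw [one_div]
    refine h.congr (fun n => ?_)
    rw [hρ]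
    simp [inv_div]
  have hystep : ∀ n, y (n+1) = (y n + 1) * ρ n := by
    intro n
    have h1 := (hg n).ne'
    have h2 := (hg (n+1)).ne'
    simp only [hy, hρ, hrec n]
    field_simp
  set ystar : ℝ := 1 / (L - 1) with hystar
  have hLm1 : (0:ℝ) < L - 1 := by linarith
  have hystarpos : 0 < ystar := by rw [hystar]; positivity
  have hfix : ystar = (ystar + 1) / L := by
    rw [hystar]; field_simp; ring
  have hxlim : Tendsto (fun n => |y n - ystar|) atTop (nhds 0) := by
    apply tendsto_zero_of_affine _ (fun n => |ρ n - 1/L| * (ystar + 1)) (1/2)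
      (by norm_num) (by norm_num) (fun n => abs_nonneg _)
    · have h0 : Tendsto (fun n => ρ n - 1/L) atTop (nhds 0) := by
        simpa using hρlim.sub_const (1/L)
      have h1 : Tendsto (fun n => |ρ n - 1/L|) atTop (nhds 0) := by
        simpa using h0.abs
      simpa using h1.mul_const (ystar + 1)
    · have hev : ∀ᶠ n in atTop, ρ n < 1/2 := by
        apply hρlim.eventually_lt_const
        rw [one_div, one_div]
        exact inv_strictAnti₀ (by norm_num) (by linarith)
      filter_upwards [hev] with n hn
      have heq : y (n+1) - ystar = ρ n * (y n - ystar) + (ρ n - 1/L) * (ystar + 1) := by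
        rw [hystep n]
        linear_combination -hfix
      calc |y (n+1) - ystar|
          = |ρ n * (y n - ystar) + (ρ n - 1/L) * (ystar + 1)| := by rw [heq]
        _ ≤ |ρ n * (y n - ystar)| + |(ρ n - 1/L) * (ystar + 1)| := abs_add_le _ _
        _ = ρ n * |y n - ystar| + |ρ n - 1/L| * (ystar + 1) := by
            rw [abs_mul, abs_mul, abs_of_pos (hρpos n),
              abs_of_pos (by positivity : (0:ℝ) < ystar + 1)]
        _ ≤ 1/2 * |y n - ystar| + |ρ n - 1/L| * (ystar + 1) := by
            have := mul_le_mul_of_nonneg_right hn.le (abs_nonneg (y n - ystar))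
            linarith
  have ylim : Tendsto y atTop (nhds ystar) := by
    rw [tendsto_iff_dist_tendsto_zero]
    simpa [Real.dist_eq] using hxlim
  have hinv : Tendsto (fun n => 1 + 1/(y n)) atTop (nhds (1 + 1/ystar)) := by
    have := ylim.inv₀ hystarpos.ne'
    simp only [one_div]
    exact tendsto_const_nhds.add this
  have hfin : 1 + 1/ystar = L := by
    rw [hystar]
    field_simp
    ring
  rw [← hfin]
  refine hinv.congr (fun n => ?_)
  have h1 := (hS n).ne'
  have h2 := (hg n).ne'
  rw [hrec n, hy]
  field_simp


noncomputable def Dr (n : ℕ) : ℝ := ((D n : ℚ) : ℝ)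
noncomputable def Rr (n : ℕ) : ℝ := ((R n : ℚ) : ℝ)

lemma E1r (n : ℕ) :
    ((n:ℝ)+2) * Dr (n+2) = 3*(2*(n:ℝ)+3) * Dr (n+1) - ((n:ℝ)+1) * Dr n := by
  have := E1 n
  rw [Dr, Dr, Dr]
  exact_mod_cast congrArg (fun q : ℚ => (q : ℝ)) this

lemma E2r (n : ℕ) :
    ((n:ℝ)+2) * (Rr (n+2) - 2 * Rr (n+1) + Rr n) = 3 * Dr (n+1) - Dr n := by
  have := E2 n
  rw [Dr, Dr, Rr, Rr, Rr]
  exact_mod_cast congrArg (fun q : ℚ => (q : ℝ)) this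

lemma D_ge_one (n : ℕ) : (1:ℚ) ≤ D n := by
  rw [D]
  have h0 : (0:ℕ) ∈ Finset.range (n+1) := by simp
  have : (Nat.choose n 0 : ℚ) * (Nat.choose (n+0) 0 : ℚ) = 1 := by simp
  calc (1:ℚ) = (Nat.choose n 0 : ℚ) * (Nat.choose (n+0) 0 : ℚ) := this.symm
    _ ≤ ∑ k ∈ Finset.range (n+1), (Nat.choose n k : ℚ) * (Nat.choose (n + k) k : ℚ) :=
      Finset.single_le_sum (f := fun k => (Nat.choose n k : ℚ) * (Nat.choose (n + k) k : ℚ))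
        (fun k _ => by positivity) h0

lemma Dr_pos (n : ℕ) : 0 < Dr n := by
  rw [Dr]
  have := D_ge_one n
  have : (1:ℝ) ≤ ((D n : ℚ) : ℝ) := by exact_mod_cast this
  linarith

lemma D0 : D 0 = 1 := by simp [D]
lemma D1 : D 1 = 3 := by
  rw [D]
  rw [Finset.sum_range_succ, Finset.sum_range_succ, Finset.sum_range_zero]
  norm_num

lemma DB : ∀ n, 3 * Dr n ≤ Dr (n+1) ∧ Dr (n+1) ≤ 6 * Dr n := by
  intro n
  induction n with
  | zero =>
    have h0 : Dr 0 = 1 := by rw [Dr, D0]; norm_num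
    have h1 : Dr 1 = 3 := by rw [Dr, D1]; norm_num
    rw [h0, h1]; norm_num
  | succ n ih =>
    obtain ⟨hl, hu⟩ := ih
    have he := E1r n
    have hp0 := Dr_pos n
    have hp1 := Dr_pos (n+1)
    have hn : (0:ℝ) ≤ (n:ℝ) := Nat.cast_nonneg n
    constructor
    · nlinarith
    · nlinarith

noncomputable def r (n : ℕ) : ℝ := Dr (n+1) / Dr n

lemma rb (n : ℕ) : 3 ≤ r n ∧ r n ≤ 6 := by
  obtain ⟨hl, hu⟩ := DB n
  have hp := Dr_pos n
  constructor
  · rw [r, le_div_iff₀ hp]; linarith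
  · rw [r, div_le_iff₀ hp]; linarith

noncomputable def lam : ℝ := 3 + 2 * Real.sqrt 2

lemma lam_sq : lam ^ 2 = 6 * lam - 1 := by
  have h : Real.sqrt 2 ^ 2 = 2 := Real.sq_sqrt (by norm_num)
  rw [lam]; nlinarith
lemma lam_gt3 : 3 < lam := by
  have h : 0 < Real.sqrt 2 := Real.sqrt_pos.mpr (by norm_num)
  rw [lam]; linarith
lemma lam_lt6 : lam < 6 := by
  have h : Real.sqrt 2 < 3/2 := by
    rw [show (3:ℝ)/2 = Real.sqrt ((3/2)^2) by rw [Real.sqrt_sq]; norm_num]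
    apply Real.sqrt_lt_sqrt (by norm_num)
    norm_num
  rw [lam]; linarith

lemma hstar (n : ℕ) :
    ((n:ℝ)+2) * (r (n+1) * r n) = 3*(2*(n:ℝ)+3) * r n - ((n:ℝ)+1) := by
  have he := E1r n
  have hp0 := (Dr_pos n).ne'
  have hp1 := (Dr_pos (n+1)).ne'
  rw [r, r]
  have e : Dr (n+1+1) = Dr (n+2) := rfl
  rw [e]
  field_simp
  linear_combination he

lemma herr (n : ℕ) :
    |r (n+1) - lam| ≤ (1/9) * |r n - lam| + 4/((n:ℝ)+2) := by
  have h3 := lam_gt3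
  have h6 := lam_lt6
  obtain ⟨hr3, hr6⟩ := rb n
  have hn2 : (0:ℝ) < (n:ℝ)+2 := by positivity
  have hM : (0:ℝ) < lam * r n * ((n:ℝ)+2) := by positivity
  have hid2 : (r (n+1) - lam) * (lam * r n * ((n:ℝ)+2))
      = -3*lam*(r n) + (r n - lam)*((n:ℝ)+2) + lam := by
    linear_combination lam * hstar n - (r n * ((n:ℝ)+2)) * lam_sq
  have habs : |r (n+1) - lam| * (lam * r n * ((n:ℝ)+2))
      = |(-3)*lam*(r n) + (r n - lam)*((n:ℝ)+2) + lam| := by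
    rw [← abs_of_pos hM, ← abs_mul, hid2]
  have hub : |(-3)*lam*(r n) + (r n - lam)*((n:ℝ)+2) + lam|
      ≤ 3*lam*(r n) + |r n - lam| * ((n:ℝ)+2) + lam := by
    calc |(-3)*lam*(r n) + (r n - lam)*((n:ℝ)+2) + lam|
        ≤ |(-3)*lam*(r n) + (r n - lam)*((n:ℝ)+2)| + |lam| := abs_add_le _ _
      _ ≤ |(-3)*lam*(r n)| + |(r n - lam)*((n:ℝ)+2)| + |lam| := by
          linarith [abs_add_le ((-3)*lam*(r n)) ((r n - lam)*((n:ℝ)+2))]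
      _ = 3*lam*(r n) + |r n - lam| * ((n:ℝ)+2) + lam := by
          have e1 : |(-3)*lam*(r n)| = 3*lam*(r n) := by
            rw [abs_of_nonpos (by nlinarith : (-3)*lam*(r n) ≤ 0)]; ring
          have e2 : |(r n - lam)*((n:ℝ)+2)| = |r n - lam| * ((n:ℝ)+2) := by
            rw [abs_mul, abs_of_pos hn2]
          have e3 : |lam| = lam := abs_of_pos (by linarith)
          rw [e1, e2, e3]
  have h9 : (9:ℝ) ≤ lam * r n := by nlinarith
  have hgoalM : ((1/9) * |r n - lam| + 4/((n:ℝ)+2)) * (lam * r n * ((n:ℝ)+2))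
      ≥ 3*lam*(r n) + |r n - lam| * ((n:ℝ)+2) + lam := by
    have hc : (4/((n:ℝ)+2)) * (lam * r n * ((n:ℝ)+2)) = 4 * (lam * r n) := by
      field_simp
    have hd : ((1/9) * |r n - lam|) * (lam * r n * ((n:ℝ)+2)) - |r n - lam| * ((n:ℝ)+2)
        = (|r n - lam| * ((n:ℝ)+2) / 9) * (lam * r n - 9) := by ring
    have he : 0 ≤ (|r n - lam| * ((n:ℝ)+2) / 9) * (lam * r n - 9) := by
      apply mul_nonneg
      · positivity
      · linarith
    nlinarith
  have hfinal : |r (n+1) - lam| * (lam * r n * ((n:ℝ)+2))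
      ≤ ((1/9) * |r n - lam| + 4/((n:ℝ)+2)) * (lam * r n * ((n:ℝ)+2)) := by
    rw [habs]
    linarith
  exact le_of_mul_le_mul_right hfinal hM

lemma r_lim : Tendsto r atTop (nhds lam) := by
  have hx : Tendsto (fun n => |r n - lam|) atTop (nhds 0) := by
    have hc : Tendsto (fun n : ℕ => 4/((n:ℝ)+2)) atTop (nhds 0) := by
      apply Tendsto.div_atTop tendsto_const_nhds
      exact tendsto_atTop_add_const_right _ 2 tendsto_natCast_atTop_atTop
    exact tendsto_zero_of_affine _ _ (1/9) (by norm_num) (by norm_num)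
      (fun n => abs_nonneg _) hc (Filter.Eventually.of_forall (fun n => herr n))
  rw [tendsto_iff_dist_tendsto_zero]
  simpa [Real.dist_eq] using hx


noncomputable def g (n : ℕ) : ℝ := (3 * Dr (n+1) - Dr n) / ((n:ℝ)+2)
noncomputable def S (n : ℕ) : ℝ := Rr (n+1) - Rr n

lemma g_pos (n : ℕ) : 0 < g n := by
  obtain ⟨hl, _⟩ := DB n
  have := Dr_pos n
  rw [g]
  have hn2 : (0:ℝ) < (n:ℝ)+2 := by positivity
  apply div_pos _ hn2
  linarith

lemma S_rec (n : ℕ) : S (n+1) = S n + g n := by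
  have he := E2r n
  have e : Rr (n+1+1) = Rr (n+2) := rfl
  rw [S, S, g, e]
  have hn2 : ((n:ℝ)+2) ≠ 0 := by positivity
  field_simp
  linear_combination he

lemma R0 : R 0 = -1 := by
  rw [R, Finset.sum_range_succ, Finset.sum_range_zero]
  norm_num

lemma R1 : R 1 = 1 := by
  rw [R, Finset.sum_range_succ, Finset.sum_range_succ, Finset.sum_range_zero]
  norm_num [Nat.choose]

lemma S0 : S 0 = 2 := by
  rw [S, Rr, Rr, R1, R0]
  norm_num

lemma S_pos (n : ℕ) : 0 < S n := by
  induction n with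
  | zero => rw [S0]; norm_num
  | succ n ih => rw [S_rec n]; have := g_pos n; linarith

lemma Rr1_pos (n : ℕ) : 0 < Rr (n+1) := by
  induction n with
  | zero =>
    have : Rr 1 = 1 := by rw [Rr, R1]; norm_num
    rw [this]; norm_num
  | succ n ih =>
    have h := S_pos (n+1)
    rw [S] at h
    linarith

lemma g_ratio : Tendsto (fun n => g (n+1) / g n) atTop (nhds lam) := by
  have h3lam : 3 * lam - 1 ≠ 0 := by have := lam_gt3; linarith
  have T1 : Tendsto (fun n : ℕ => ((n:ℝ)+2)/((n:ℝ)+3)) atTop (nhds 1) := by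
    have h0 : Tendsto (fun n : ℕ => 1/((n:ℝ)+3)) atTop (nhds 0) := by
      apply Tendsto.div_atTop tendsto_const_nhds
      exact tendsto_atTop_add_const_right _ 3 tendsto_natCast_atTop_atTop
    have := Tendsto.sub (tendsto_const_nhds : Tendsto (fun _ : ℕ => (1:ℝ)) atTop (nhds 1)) h0
    rw [sub_zero] at this
    refine this.congr (fun n => ?_)
    have : ((n:ℝ)+3) ≠ 0 := by positivity
    field_simp
    ring
  have T2 : Tendsto r atTop (nhds lam) := r_lim
  have T3 : Tendsto (fun n => r (n+1)) atTop (nhds lam) :=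
    T2.comp (tendsto_add_atTop_nat 1)
  have T4 : Tendsto (fun n => r n * (3 * r (n+1) - 1) / (3 * r n - 1)) atTop
      (nhds (lam * (3 * lam - 1) / (3 * lam - 1))) := by
    exact ((T2.mul ((T3.const_mul 3).sub_const 1)).div
      ((T2.const_mul 3).sub_const 1) h3lam)
  have T5 : Tendsto (fun n : ℕ => (((n:ℝ)+2)/((n:ℝ)+3)) * (r n * (3 * r (n+1) - 1) / (3 * r n - 1)))
      atTop (nhds lam) := by
    have := T1.mul T4
    rw [one_mul] at this
    rwa [mul_div_assoc, div_self h3lam, mul_one] at this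
  refine T5.congr (fun n => ?_)
  have hd0 := (Dr_pos n).ne'
  have hd1 := (Dr_pos (n+1)).ne'
  have hd2 := (Dr_pos (n+2)).ne'
  have h8 : 3 * r n - 1 ≠ 0 := by have := (rb n).1; linarith
  have hn2 : ((n:ℝ)+2) ≠ 0 := by positivity
  have hn3 : ((n:ℝ)+3) ≠ 0 := by positivity
  have hgn : g n ≠ 0 := (g_pos n).ne'
  rw [g, g, r, r]
  have e1 : Dr (n+1+1) = Dr (n+2) := rfl
  have e2 : ((n+1 : ℕ) : ℝ) = (n:ℝ)+1 := by push_cast; ring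
  rw [e1, e2]
  have h3ba : 3 * Dr (n+1) - Dr n ≠ 0 := by
    have := (DB n).1; have := Dr_pos n; linarith
  have h3cb : 3 * Dr (n+2) - Dr (n+1) ≠ 0 := by
    have := (DB (n+1)).1; have := Dr_pos (n+1)
    have e : Dr (n+1+1) = Dr (n+2) := rfl
    rw [e] at *; linarith
  field_simp
  ring

theorem stmt_11 :
    Filter.Tendsto (fun n : ℕ => (R (n + 1) : ℝ) / (R n : ℝ)) Filter.atTop
      (nhds (3 + 2 * Real.sqrt 2)) := by
  have main1 : Tendsto (fun n => S (n+1) / S n) atTop (nhds lam) :=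
    ratio_limit g S lam lam_gt3.le g_pos S_pos S_rec g_ratio
  have main2 : Tendsto (fun n => Rr (n+1+1) / Rr (n+1)) atTop (nhds lam) := by
    apply ratio_limit (fun n => S (n+1)) (fun n => Rr (n+1)) lam lam_gt3.le
      (fun n => S_pos (n+1)) Rr1_pos
    · intro n
      have h := S_rec n
      rw [S]
      ring
    · exact (main1.comp (tendsto_add_atTop_nat 1)).congr (fun n => rfl)
  have main3 : Tendsto (fun n => Rr (n+1) / Rr n) atTop (nhds lam) :=
    (tendsto_add_atTop_iff_nat 1).mp main2
  rw [show (3 + 2 * Real.sqrt 2) = lam from rfl]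
  exact main3.congr (fun n => rfl)
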